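/- The relation ≺* is a strict well-order on the collection of all finite subsets of ℕ × Ordinal: it is irreflexive, transitive, total (for distinct finite subsets s ≠ s', either s ≺* s' or s' ≺* s), and well-founded (there is no infinite strictly ≺*-descending sequence of finite subsets of ℕ × Ordinal; equivalently, ≺* is a well-founded relation). -/

import Mathlib

universe u

/-- The well-order `≺` on `ℕ × Ord`: `(m, α) ≺ (n, β)` iff `α < β`, or
`α = β` and `m < n`. -/
def precPair (x y : ℕ × Ordinal.{u}) : Prop :=
  x.2 < y.2 ∨ (x.2 = y.2 ∧ x.1 < y.1)

/-- The canonical well-order `≺*` "by largest difference" on finite subsets of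
`ℕ × Ord`: `s ≺* s'` iff there is `x ∈ s' \ s` with
`{y ∈ s | y ≻ x} = {y ∈ s' | y ≻ x}`. -/
def precStar (s s' : Finset (ℕ × Ordinal.{u})) : Prop :=
  ∃ x ∈ s', x ∉ s ∧
    {y : ℕ × Ordinal.{u} | y ∈ s ∧ precPair x y} =
    {y : ℕ × Ordinal.{u} | y ∈ s' ∧ precPair x y}

open Finset Finset.Colex

/-- Colex on finsets of a well-ordered linear order is well-founded. -/
theorem colex_wellFounded {α : Type*} [LinearOrder α] [WellFoundedLT α] :
    WellFounded ((· < ·) : Colex (Finset α) → Colex (Finset α) → Prop) := by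
  classical
  have hbot : Acc ((· < ·) : Colex (Finset α) → Colex (Finset α) → Prop) ⊥ := by
    constructor
    intro t ht
    exact absurd ht (not_lt_bot)
  have key : ∀ a : α, ∀ s : Finset α, (∀ x ∈ s, x ≤ a) →
      Acc ((· < ·) : Colex (Finset α) → Colex (Finset α) → Prop) (toColex s) := by
    intro a
    induction a using WellFoundedLT.induction with
    | _ a IH =>
      have small : ∀ t : Finset α, (∀ x ∈ t, x < a) → Acc (· < ·) (toColex t) := by
        intro t ht
        rcases t.eq_empty_or_nonempty with rfl | hne
        · simpa using hbot
        · exact IH (t.max' hne) (ht _ (t.max'_mem hne)) t fun x hx => t.le_max' x hx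
      have insert_acc : ∀ c : Colex (Finset α), Acc (· < ·) c →
          (∀ x ∈ ofColex c, x < a) → Acc (· < ·) (toColex (insert a (ofColex c))) := by
        intro c hc
        induction hc with
        | intro c _ IH2 =>
          intro hbound
          have hac : a ∉ ofColex c := fun h => lt_irrefl a (hbound a h)
          constructor
          intro t ht
          have hbnd : ∀ x ∈ insert a (ofColex c), x ≤ a := by
            intro x hx
            rcases Finset.mem_insert.1 hx with rfl | hx
            · exact le_rfl
            · exact (hbound x hx).le
          have htb : ∀ x ∈ ofColex t, x ≤ a := by
            have := Finset.Colex.forall_le_mono (s := ofColex t)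
              (t := insert a (ofColex c)) (a := a) (by simpa using ht.le) hbnd
            exact this
          by_cases hat : a ∈ ofColex t
          · have h1 : toColex (ofColex t \ {a}) < toColex ((insert a (ofColex c)) \ {a}) := by
              rw [Finset.Colex.toColex_sdiff_lt_toColex_sdiff
                (by simpa using hat) (by simp)]
              simpa using ht
            have h2 : (insert a (ofColex c)) \ {a} = ofColex c := by
              rw [Finset.sdiff_singleton_eq_erase, Finset.erase_insert hac]
            rw [h2] at h1
            have hb2 : ∀ x ∈ ofColex (toColex (ofColex t \ {a})), x < a := by
              intro x hx
              simp only [ofColex_toColex, Finset.sdiff_singleton_eq_erase,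
                Finset.mem_erase] at hx
              exact lt_of_le_of_ne (htb x hx.2) hx.1
            have := IH2 (toColex (ofColex t \ {a})) h1 hb2
            have h3 : insert a (ofColex (toColex (ofColex t \ {a}))) = ofColex t := by
              simp only [ofColex_toColex, Finset.sdiff_singleton_eq_erase]
              exact Finset.insert_erase hat
            rw [h3] at this
            simpa using this
          · have : ∀ x ∈ ofColex t, x < a := fun x hx =>
              lt_of_le_of_ne (htb x hx) (fun h => hat (h ▸ hx))
            have := small (ofColex t) this
            simpa using this
      intro s hs
      by_cases has : a ∈ s
      · have h1 : ∀ x ∈ s.erase a, x < a := by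
          intro x hx
          exact lt_of_le_of_ne (hs x (Finset.mem_of_mem_erase hx)) (Finset.ne_of_mem_erase hx)
        have h2 := insert_acc (toColex (s.erase a)) (small _ h1) (by simpa using h1)
        have h3 : insert a (ofColex (toColex (s.erase a))) = s := by
          simp only [ofColex_toColex]
          exact Finset.insert_erase has
        rwa [h3] at h2
      · exact small s fun x hx => lt_of_le_of_ne (hs x hx) (fun h => has (h ▸ hx))
  constructor
  intro c
  rcases (ofColex c).eq_empty_or_nonempty with he | hne
  · have : c = ⊥ := by
      rw [← toColex_ofColex c, he]; rfl
    rwa [this]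
  · have := key ((ofColex c).max' hne) (ofColex c) (fun x hx => Finset.le_max' _ x hx)
    simpa using this

/-- The embedding of `ℕ × Ordinal` into the lexicographic product `Ordinal ×ₗ ℕ`. -/
def precEmb : (ℕ × Ordinal.{u}) ↪ (Ordinal.{u} ×ₗ ℕ) :=
  ⟨fun x => toLex (x.2, x.1), by
    intro x y h
    simp only [toLex_inj, Prod.mk.injEq] at h
    exact Prod.ext h.2 h.1⟩

theorem precPair_iff (x y : ℕ × Ordinal.{u}) : precPair x y ↔ precEmb x < precEmb y := by
  show precPair x y ↔ toLex (x.2, x.1) < toLex (y.2, y.1)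
  simp [precPair, precEmb, Prod.Lex.lt_iff]

theorem precStar_iff (s t : Finset (ℕ × Ordinal.{u})) :
    precStar s t ↔ toColex (s.map precEmb) < toColex (t.map precEmb) := by
  classical
  rw [Finset.Colex.lt_iff_exists_filter_lt]
  constructor
  · rintro ⟨x, hxt, hxs, hset⟩
    have hkey : ∀ y, (y ∈ s ∧ precPair x y) ↔ (y ∈ t ∧ precPair x y) := by
      intro y
      exact Set.ext_iff.1 hset y
    refine ⟨precEmb x, ?_, ?_⟩
    · rw [Finset.mem_sdiff]
      exact ⟨Finset.mem_map_of_mem _ hxt, fun h => hxs ((Finset.mem_map' _).1 h)⟩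
    · ext a
      simp only [Finset.mem_filter, Finset.mem_map]
      constructor
      · rintro ⟨⟨y, hy, rfl⟩, hlt⟩
        have := (hkey y).1 ⟨hy, (precPair_iff x y).2 hlt⟩
        exact ⟨⟨y, this.1, rfl⟩, hlt⟩
      · rintro ⟨⟨y, hy, rfl⟩, hlt⟩
        have := (hkey y).2 ⟨hy, (precPair_iff x y).2 hlt⟩
        exact ⟨⟨y, this.1, rfl⟩, hlt⟩
  · rintro ⟨w, hw, hfil⟩
    rw [Finset.mem_sdiff] at hw
    obtain ⟨x, hxt, rfl⟩ := Finset.mem_map.1 hw.1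
    have hxs : x ∉ s := fun h => hw.2 (Finset.mem_map_of_mem _ h)
    refine ⟨x, hxt, hxs, ?_⟩
    ext y
    simp only [Set.mem_setOf_eq]
    have hfil' := Finset.ext_iff.1 hfil (precEmb y)
    simp only [Finset.mem_filter, Finset.mem_map] at hfil'
    constructor
    · rintro ⟨hy, hp⟩
      have := hfil'.1 ⟨⟨y, hy, rfl⟩, (precPair_iff x y).1 hp⟩
      obtain ⟨⟨z, hz, hzy⟩, _⟩ := this
      have : z = y := precEmb.injective hzy
      exact ⟨this ▸ hz, hp⟩
    · rintro ⟨hy, hp⟩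
      have := hfil'.2 ⟨⟨y, hy, rfl⟩, (precPair_iff x y).1 hp⟩
      obtain ⟨⟨z, hz, hzy⟩, _⟩ := this
      have : z = y := precEmb.injective hzy
      exact ⟨this ▸ hz, hp⟩

/-- `≺*` is a strict well-order on the finite subsets of `ℕ × Ord`: it is
irreflexive, transitive, total on distinct sets, and well-founded. -/
theorem precStar_isStrictWellOrder :
    (∀ s : Finset (ℕ × Ordinal.{u}), ¬ precStar s s) ∧
    (∀ s t u : Finset (ℕ × Ordinal.{u}), precStar s t → precStar t u → precStar s u) ∧
    (∀ s t : Finset (ℕ × Ordinal.{u}), s ≠ t → precStar s t ∨ precStar t s) ∧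
    WellFounded (precStar.{u}) := by
  refine ⟨?_, ?_, ?_, ?_⟩
  · intro s hs
    exact lt_irrefl _ ((precStar_iff s s).1 hs)
  · intro s t u hst htu
    exact (precStar_iff s u).2 (lt_trans ((precStar_iff s t).1 hst) ((precStar_iff t u).1 htu))
  · intro s t hne
    have h : toColex (s.map precEmb) ≠ toColex (t.map precEmb) := by
      simp only [ne_eq, toColex_inj]
      exact fun h => hne (Finset.map_injective _ h)
    rcases lt_or_gt_of_ne h with h | h
    · exact Or.inl ((precStar_iff s t).2 h)
    · exact Or.inr ((precStar_iff t s).2 h)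
  · have hwf : WellFounded
        (InvImage ((· < ·) : Colex (Finset (Ordinal.{u} ×ₗ ℕ)) → _ → Prop)
          (fun s : Finset (ℕ × Ordinal.{u}) => toColex (s.map precEmb))) :=
      InvImage.wf _ colex_wellFounded
    exact Subrelation.wf (fun {s t} h => (precStar_iff s t).1 h) hwf
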